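/- For every real ι > 0 such that ι/β is not an integer, ψ is differentiable at ι with derivative ψ'(ι) = ∑_{i=0}^{⌊ι/β⌋} (γ(ι − iβ))^i / i! · exp(−γ(ι − iβ)). -/

import Mathlib

open Real Finset

/-- Normalized residual of the `i`-th Taylor approximation of the exponential:
`R_i(x) = (exp x − ∑_{j=0}^{i} x^j/j!) / exp x`. -/
noncomputable def Rres (i : ℕ) (x : ℝ) : ℝ :=
  (Real.exp x - ∑ j ∈ Finset.range (i + 1), x ^ j / (Nat.factorial j : ℝ)) / Real.exp x

/-- Expected crawl-interval length `ψ(ι) = ∑_{i=0}^{⌊ι/β⌋} (1/γ)·R_i(γ(ι − iβ))`. -/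
noncomputable def psi (γ β : ℝ) (ι : ℝ) : ℝ :=
  ∑ i ∈ Finset.range (⌊ι / β⌋₊ + 1), (1 / γ) * Rres i (γ * (ι - (i : ℝ) * β))

lemma Rres_eq (i : ℕ) (x : ℝ) :
    Rres i x = 1 - (∑ j ∈ Finset.range (i + 1), x ^ j / (Nat.factorial j : ℝ)) * Real.exp (-x) := by
  unfold Rres
  rw [Real.exp_neg]
  field_simp [Real.exp_ne_zero]

lemma hasDerivAt_partial_sum (i : ℕ) (x : ℝ) :
    HasDerivAt (fun y => ∑ j ∈ Finset.range (i + 1), y ^ j / (Nat.factorial j : ℝ))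
      (∑ j ∈ Finset.range i, x ^ j / (Nat.factorial j : ℝ)) x := by
  induction i with
  | zero => simpa using (hasDerivAt_const x (1 : ℝ))
  | succ n ih =>
    have h1 : HasDerivAt (fun y : ℝ => y ^ (n + 1) / (Nat.factorial (n + 1) : ℝ))
        (x ^ n / (Nat.factorial n : ℝ)) x := by
      have : HasDerivAt (fun y : ℝ => y ^ (n + 1) / (Nat.factorial (n + 1) : ℝ))
          (((n + 1 : ℕ) : ℝ) * x ^ (n + 1 - 1) / (Nat.factorial (n + 1) : ℝ)) x :=
        (hasDerivAt_pow (n + 1) x).div_const (Nat.factorial (n + 1) : ℝ)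
      convert this using 1
      rw [Nat.factorial_succ]
      push_cast
      have hne : (Nat.factorial n : ℝ) ≠ 0 := Nat.cast_ne_zero.2 (Nat.factorial_ne_zero n)
      field_simp
    have key : (fun y : ℝ => ∑ j ∈ Finset.range (n + 1 + 1), y ^ j / (Nat.factorial j : ℝ))
        = fun y => (∑ j ∈ Finset.range (n + 1), y ^ j / (Nat.factorial j : ℝ))
          + y ^ (n + 1) / (Nat.factorial (n + 1) : ℝ) := by
      funext y; rw [Finset.sum_range_succ]
    rw [key, Finset.sum_range_succ]
    exact ih.add h1

lemma hasDerivAt_Rres (i : ℕ) (x : ℝ) :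
    HasDerivAt (Rres i) (x ^ i / (Nat.factorial i : ℝ) * Real.exp (-x)) x := by
  have hS := hasDerivAt_partial_sum i x
  have hE : HasDerivAt (fun y : ℝ => Real.exp (-y)) (-Real.exp (-x)) x := by
    have h0 : HasDerivAt (fun y : ℝ => -y) (-1) x := hasDerivAt_neg x
    have h3 := (Real.hasDerivAt_exp (-x)).comp x h0
    rw [mul_neg_one] at h3
    exact h3
  have h := ((hasDerivAt_const x (1 : ℝ)).fun_sub (hS.fun_mul hE))
  have heq : (fun y => 1 - (∑ j ∈ Finset.range (i + 1), y ^ j / (Nat.factorial j : ℝ)) * Real.exp (-y)) = Rres i := by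
    funext y; rw [Rres_eq]
  rw [heq] at h
  refine h.congr_deriv ?_
  rw [Finset.sum_range_succ]
  ring

/-- For every real `ι > 0` such that `ι/β` is not an integer, `ψ` is differentiable at `ι` with
derivative `ψ'(ι) = ∑_{i=0}^{⌊ι/β⌋} (γ(ι − iβ))^i / i! · exp(−γ(ι − iβ))`. -/
theorem stmt_4 (γ β ι : ℝ) (hγ : 0 < γ) (hβ : 0 < β) (hι : 0 < ι)
    (hnotint : ∀ k : ℤ, ι / β ≠ (k : ℝ)) :
    HasDerivAt (psi γ β)
      (∑ i ∈ Finset.range (⌊ι / β⌋₊ + 1),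
        (γ * (ι - (i : ℝ) * β)) ^ i / (Nat.factorial i : ℝ) *
          Real.exp (-(γ * (ι - (i : ℝ) * β)))) ι := by
  set n := ⌊ι / β⌋₊ with hn
  -- locally constant floor
  have h1 : (n : ℝ) < ι / β := by
    rcases lt_or_eq_of_le (Nat.floor_le (le_of_lt (div_pos hι hβ))) with h | h
    · exact h
    · exact absurd h.symm (hnotint n)
  have h2 : ι / β < (n : ℝ) + 1 := Nat.lt_floor_add_one _
  have hmem : ι ∈ Set.Ioo ((n : ℝ) * β) (((n : ℝ) + 1) * β) := by
    constructor
    · calc (n : ℝ) * β < (ι / β) * β := by exact mul_lt_mul_of_pos_right h1 hβ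
        _ = ι := div_mul_cancel₀ ι (ne_of_gt hβ)
    · calc ι = (ι / β) * β := (div_mul_cancel₀ ι (ne_of_gt hβ)).symm
        _ < ((n : ℝ) + 1) * β := mul_lt_mul_of_pos_right h2 hβ
  have hfloor : ∀ᶠ y in nhds ι, ⌊y / β⌋₊ = n := by
    filter_upwards [Ioo_mem_nhds hmem.1 hmem.2] with y hy
    have hy1 : (n : ℝ) ≤ y / β := le_of_lt ((lt_div_iff₀ hβ).2 hy.1)
    have hy2 : y / β < (n : ℝ) + 1 := (div_lt_iff₀ hβ).2 hy.2
    rw [Nat.floor_eq_iff (le_trans (Nat.cast_nonneg n) hy1)]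
    exact ⟨hy1, by push_cast; exact hy2⟩
  have heq : psi γ β =ᶠ[nhds ι]
      (fun y => ∑ i ∈ Finset.range (n + 1), (1 / γ) * Rres i (γ * (y - (i : ℝ) * β))) := by
    filter_upwards [hfloor] with y hy
    unfold psi
    rw [hy]
  have hD : HasDerivAt
      (fun y => ∑ i ∈ Finset.range (n + 1), (1 / γ) * Rres i (γ * (y - (i : ℝ) * β)))
      (∑ i ∈ Finset.range (n + 1),
        (γ * (ι - (i : ℝ) * β)) ^ i / (Nat.factorial i : ℝ) *
          Real.exp (-(γ * (ι - (i : ℝ) * β)))) ι := by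
    apply HasDerivAt.fun_sum
    intro i _
    have hinner : HasDerivAt (fun y : ℝ => γ * (y - (i : ℝ) * β)) γ ι := by
      simpa using ((hasDerivAt_id ι).sub_const ((i : ℝ) * β)).const_mul γ
    have := ((hasDerivAt_Rres i (γ * (ι - (i : ℝ) * β))).comp ι hinner).const_mul (1 / γ)
    refine this.congr_deriv ?_
    field_simp
  exact hD.congr_of_eventuallyEq heq
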